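/- Strong-convexity L² bound: Let μ := inf_{t∈I_r} f''(t) > 0 for a twice continuously differentiable convex f on interval I_r. Let p_de be a probability density, r*, r : 𝒳 → I_r measurable functions square-integrable with respect to p_de. Then BR_f(r) − BR_f(r*) ≥ (μ/2)·‖r − r*‖²_{L²(p_de)}, where BR_f(r) := E_de[f'(r(X))r(X) − f(r(X))] − E_nu[f'(r(X))] and p_nu = r*·p_de. -/

import Mathlib

open MeasureTheory

/-- Pointwise strong-convexity (Bregman divergence lower bound). -/
lemma bregman_key {b_r B_r : ℝ} {f f' f'' : ℝ → ℝ}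
    (hder1 : ∀ t ∈ Set.Ioo b_r B_r, HasDerivAt f (f' t) t)
    (hder2 : ∀ t ∈ Set.Ioo b_r B_r, HasDerivAt f' (f'' t) t)
    {m : ℝ} (hmle : ∀ t ∈ Set.Ioo b_r B_r, m ≤ f'' t)
    {a b : ℝ} (ha : a ∈ Set.Ioo b_r B_r) (hb : b ∈ Set.Ioo b_r B_r) :
    m / 2 * (b - a) ^ 2 ≤ f b - f a - f' a * (b - a) := by
  set g : ℝ → ℝ := fun t => f t - m / 2 * t ^ 2 with hg
  set g' : ℝ → ℝ := fun t => f' t - m * t with hg'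
  have hgd : ∀ t ∈ Set.Ioo b_r B_r, HasDerivAt g (g' t) t := by
    intro t ht
    have h2 : HasDerivAt (fun t : ℝ => m / 2 * t ^ 2) (m * t) t := by
      have := (hasDerivAt_pow 2 t).const_mul (m / 2)
      refine this.congr_deriv ?_
      norm_num
      ring
    exact (hder1 t ht).sub h2
  have hgd2 : ∀ t ∈ Set.Ioo b_r B_r, HasDerivAt g' (f'' t - m) t := by
    intro t ht
    have hlin : HasDerivAt (fun t : ℝ => m * t) m t := by
      simpa using (hasDerivAt_id t).const_mul m
    exact (hder2 t ht).sub hlin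
  have hconv : ConvexOn ℝ (Set.Ioo b_r B_r) g := by
    apply convexOn_of_hasDerivWithinAt2_nonneg (f' := g') (f'' := fun t => f'' t - m)
      (convex_Ioo _ _)
    · intro t ht
      exact ((hgd t ht).continuousAt).continuousWithinAt
    · intro t ht
      rw [interior_Ioo] at ht ⊢
      exact (hgd t ht).hasDerivWithinAt
    · intro t ht
      rw [interior_Ioo] at ht ⊢
      exact (hgd2 t ht).hasDerivWithinAt
    · intro t ht
      rw [interior_Ioo] at ht
      linarith [hmle t ht]
  have htan : 0 ≤ g b - g a - g' a * (b - a) := by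
    rcases lt_trichotomy a b with h | h | h
    · have := hconv.le_slope_of_hasDerivAt ha hb h (hgd a ha)
      rw [slope_def_field] at this
      have hba : (0:ℝ) < b - a := by linarith
      rw [le_div_iff₀ hba] at this
      linarith
    · simp [h]
    · have := hconv.slope_le_of_hasDerivAt hb ha h (hgd a ha)
      rw [slope_def_field] at this
      have hba : (0:ℝ) < a - b := by linarith
      rw [div_le_iff₀ hba] at this
      nlinarith
  simp only [hg, hg'] at htan
  nlinarith [htan]

/-- Strong-convexity L² bound for the Bregman risk. Here the denominator distribution is a
probability measure `μde`, the true density ratio is `rstar` (so the numerator distribution has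
density `rstar` w.r.t. `μde`), and
`BR_f(r) = E_de[f'(r) r - f(r)] - E_nu[f'(r)]` with `E_nu[g] = ∫ rstar · g dμde`.
If `f'' ≥ m > 0` on the interval `I_r = (b_r, B_r)`, then
`BR_f(r) - BR_f(r*) ≥ (m/2) ‖r - r*‖²_{L²(p_de)}`. -/
theorem statement_7 {α : Type*} [MeasurableSpace α]
    (μde : Measure α) [IsProbabilityMeasure μde]
    (b_r B_r : ℝ) (hbB : b_r < B_r)
    (f f' f'' : ℝ → ℝ)
    (hder1 : ∀ t ∈ Set.Ioo b_r B_r, HasDerivAt f (f' t) t)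
    (hder2 : ∀ t ∈ Set.Ioo b_r B_r, HasDerivAt f' (f'' t) t)
    (hcont : ContinuousOn f'' (Set.Ioo b_r B_r))
    (m : ℝ) (hm : 0 < m) (hmle : ∀ t ∈ Set.Ioo b_r B_r, m ≤ f'' t)
    (rstar r : α → ℝ) (hrstar_meas : Measurable rstar) (hr_meas : Measurable r)
    (hrstar_mem : ∀ x, rstar x ∈ Set.Ioo b_r B_r) (hr_mem : ∀ x, r x ∈ Set.Ioo b_r B_r)
    (hrstar_one : ∫ x, rstar x ∂μde = 1)
    (hint1 : Integrable (fun x => f' (r x) * r x - f (r x)) μde)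
    (hint2 : Integrable (fun x => rstar x * f' (r x)) μde)
    (hint3 : Integrable (fun x => f' (rstar x) * rstar x - f (rstar x)) μde)
    (hint4 : Integrable (fun x => rstar x * f' (rstar x)) μde)
    (hint5 : Integrable (fun x => (r x - rstar x) ^ 2) μde) :
    m / 2 * ∫ x, (r x - rstar x) ^ 2 ∂μde ≤
      ((∫ x, (f' (r x) * r x - f (r x)) ∂μde) - ∫ x, rstar x * f' (r x) ∂μde) -
      ((∫ x, (f' (rstar x) * rstar x - f (rstar x)) ∂μde) -
        ∫ x, rstar x * f' (rstar x) ∂μde) := by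
  have h12 : Integrable (fun x => (f' (r x) * r x - f (r x)) - rstar x * f' (r x)) μde :=
    hint1.sub hint2
  have h34 : Integrable
      (fun x => (f' (rstar x) * rstar x - f (rstar x)) - rstar x * f' (rstar x)) μde :=
    hint3.sub hint4
  have hall : Integrable (fun x => ((f' (r x) * r x - f (r x)) - rstar x * f' (r x)) -
      ((f' (rstar x) * rstar x - f (rstar x)) - rstar x * f' (rstar x))) μde := h12.sub h34
  have hRHS :
      ((∫ x, (f' (r x) * r x - f (r x)) ∂μde) - ∫ x, rstar x * f' (r x) ∂μde) -
      ((∫ x, (f' (rstar x) * rstar x - f (rstar x)) ∂μde) -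
        ∫ x, rstar x * f' (rstar x) ∂μde)
      = ∫ x, (((f' (r x) * r x - f (r x)) - rstar x * f' (r x)) -
          ((f' (rstar x) * rstar x - f (rstar x)) - rstar x * f' (rstar x))) ∂μde := by
    rw [integral_sub h12 h34, integral_sub hint1 hint2, integral_sub hint3 hint4]
  rw [hRHS, ← integral_const_mul]
  apply integral_mono (hint5.const_mul _) hall
  intro x
  have key := bregman_key hder1 hder2 hmle (hr_mem x) (hrstar_mem x)
  have hsq : (r x - rstar x) ^ 2 = (rstar x - r x) ^ 2 := by ring
  simp only
  nlinarith [key]
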